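/- Let (P,⪯₊,⪯₋) be a compatible double poset. Then the double order polytope T_O(P,⪯₊,⪯₋) is exactly the set of pairs (f,t) ∈ ℝ^P × ℝ satisfying ℓ_C(f) − sgn(C)·t ≤ 1 for every alternating chain C of (P,⪯₊,⪯₋) (including the improper alternating chains ⊥ ≺_σ ⊤). -/

import Mathlib

open Set Pointwise

/-- The order polytope of a finite poset `(P, le)`: order-preserving maps into `[0,1]`. -/
def orderPoly (P : Type*) [Fintype P] (le : P → P → Prop) : Set (P → ℝ) :=
  {f | (∀ a, 0 ≤ f a ∧ f a ≤ 1) ∧ ∀ a b, le a b → f a ≤ f b}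

/-- The double order polytope `T_O(P, lep, lem) = conv((2·O(P₊) × {1}) ∪ ((−2·O(P₋)) × {−1}))`. -/
def doubleOrderPoly (P : Type*) [Fintype P] (lep lem : P → P → Prop) :
    Set ((P → ℝ) × ℝ) :=
  convexHull ℝ
    (((fun f => (f, (1 : ℝ))) '' ((2 : ℝ) • orderPoly P lep)) ∪
     ((fun f => (f, (-1 : ℝ))) '' ((-2 : ℝ) • orderPoly P lem)))

/-- A double poset is compatible if some linear order refines both partial orders. -/
def Compatible (P : Type*) (lep lem : P → P → Prop) : Prop :=
  ∃ l : P → P → Prop, IsLinearOrder P l ∧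
    (∀ a b, lep a b → l a b) ∧ (∀ a b, lem a b → l a b)

/-- An alternating chain `⊥ = p₀ ≺_σ p₁ ≺_{−σ} p₂ ≺_σ ⋯ ≺ p_k = ⊤` of the double poset
`(P, lep, lem)`, recorded by its sign `sg = σ ∈ {1,−1}` and the sequence
`q j = p_{j+1}` (for `0 ≤ j < m`, `m = k − 1`) of its interior elements; the relations
involving the adjoined global minimum `⊥` and maximum `⊤` hold automatically, and the
`j`-th interior step `p_{j+1} ≺ p_{j+2}` uses the order with sign `σ·(−1)^{j+1}`
(strictness of the steps follows from injectivity).  The improper chains `⊥ ≺_σ ⊤`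
correspond to `m = 0`. -/
structure AltChain (P : Type*) (lep lem : P → P → Prop) where
  sg : ℤ
  hsg : sg = 1 ∨ sg = -1
  m : ℕ
  q : Fin m → P
  inj : Function.Injective q
  step : ∀ (j : ℕ) (h : j + 1 < m),
    (if sg * (-1) ^ (j + 1) = 1 then lep else lem)
      (q ⟨j, Nat.lt_of_succ_lt h⟩) (q ⟨j + 1, h⟩)

/-- The linear functional `ℓ_C(f) = σ · ∑_{i=1}^{k−1} (−1)^i f(p_i)` of an alternating chain. -/
def AltChain.ell {P : Type*} {lep lem : P → P → Prop}
    (C : AltChain P lep lem) (f : P → ℝ) : ℝ :=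
  (C.sg : ℝ) * ∑ j : Fin C.m, (-1 : ℝ) ^ ((j : ℕ) + 1) * f (C.q j)

/-- The sign `sgn(C) = σ·(−1)^{k−1}` of the last relation of an alternating chain. -/
def AltChain.sgn {P : Type*} {lep lem : P → P → Prop}
    (C : AltChain P lep lem) : ℝ :=
  (C.sg : ℝ) * (-1 : ℝ) ^ C.m

namespace DOPAux

variable {P : Type*} {lep lem : P → P → Prop}

def emptyChain (lep lem : P → P → Prop) (sg : ℤ) (hsg : sg = 1 ∨ sg = -1) :
    AltChain P lep lem :=
  ⟨sg, hsg, 0, Fin.elim0, fun i => i.elim0, fun _ h => absurd h (by omega)⟩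

@[simp] lemma emptyChain_ell (sg hsg) (f : P → ℝ) :
    (emptyChain lep lem sg hsg).ell f = 0 := by
  simp [AltChain.ell, emptyChain]
  exact Or.inr (Finset.sum_of_isEmpty _)

@[simp] lemma emptyChain_sgn (sg hsg) :
    (emptyChain (P := P) lep lem sg hsg).sgn = (sg : ℝ) := by
  simp [AltChain.sgn, emptyChain]

def oneChain (lep lem : P → P → Prop) (sg : ℤ) (hsg : sg = 1 ∨ sg = -1) (p : P) :
    AltChain P lep lem :=
  ⟨sg, hsg, 1, fun _ => p, fun i j _ => Subsingleton.elim i j, fun _ h => absurd h (by omega)⟩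

@[simp] lemma oneChain_ell (sg hsg) (p : P) (f : P → ℝ) :
    (oneChain lep lem sg hsg p).ell f = -((sg : ℝ) * f p) := by
  simp [AltChain.ell, oneChain]
  left
  convert one_mul (f p)
  exact_mod_cast Finset.card_univ.trans (Fintype.card_fin 1)

@[simp] lemma oneChain_sgn (sg hsg) (p : P) :
    (oneChain lep lem sg hsg p).sgn = -(sg : ℝ) := by
  simp [AltChain.sgn, oneChain]

lemma ell_of_m_eq_zero (C : AltChain P lep lem) (h : C.m = 0) (f : P → ℝ) :
    C.ell f = 0 := by
  have : IsEmpty (Fin C.m) := by rw [h]; infer_instance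
  simp [AltChain.ell]

/-- extend a function on `Fin n` by one value -/
def extq {n : ℕ} (q : Fin n → P) (p : P) : Fin (n + 1) → P :=
  fun i => if h : (i : ℕ) < n then q ⟨i, h⟩ else p

lemma extq_lt {n : ℕ} (q : Fin n → P) (p : P) (j : ℕ) (h : j < n) (h2 : j < n + 1) :
    extq q p ⟨j, h2⟩ = q ⟨j, h⟩ := dif_pos h

lemma extq_last {n : ℕ} (q : Fin n → P) (p : P) (h2 : n < n + 1) :
    extq q p ⟨n, h2⟩ = p := dif_neg (by simp)

def snocChain (C : AltChain P lep lem) (p : P) (hp : ∀ i, C.q i ≠ p)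
    (hstep : ∀ _ : C.m ≠ 0,
      (if C.sg * (-1) ^ C.m = 1 then lep else lem)
        (C.q ⟨C.m - 1, by omega⟩) p) :
    AltChain P lep lem where
  sg := C.sg
  hsg := C.hsg
  m := C.m + 1
  q := extq C.q p
  inj := by
    intro i j hij
    unfold extq at hij
    split_ifs at hij with hi hj hj
    · have := congrArg Fin.val (C.inj hij)
      simp only [Fin.val_mk] at this
      exact Fin.ext this
    · exact absurd hij (hp _)
    · exact absurd hij.symm (hp _)
    · exact Fin.ext (by omega)
  step := by
    intro j h
    rcases Nat.lt_or_ge (j + 1) C.m with h' | h'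
    · have := C.step j h'
      rwa [extq_lt C.q p j (by omega), extq_lt C.q p (j + 1) h'] 
    · have hj1 : j + 1 = C.m := by omega
      have h0 : C.m ≠ 0 := by omega
      have := hstep h0
      have e1 : extq C.q p ⟨j, Nat.lt_of_succ_lt h⟩ = C.q ⟨C.m - 1, by omega⟩ := by
        rw [extq_lt C.q p j (by omega)]
        congr 1
        exact Fin.ext (show j = C.m - 1 by omega)
      have e2 : extq C.q p ⟨j + 1, h⟩ = p := by
        have he : (⟨j + 1, h⟩ : Fin (C.m + 1)) = ⟨C.m, by omega⟩ := Fin.ext (show j + 1 = C.m by omega)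
        rw [he, extq_last]
      have hcond : C.sg * (-1 : ℤ) ^ (j + 1) = C.sg * (-1) ^ C.m := by rw [hj1]
      rw [e1, e2, hcond]
      exact this

lemma snocChain_ell (C : AltChain P lep lem) (p hp hstep) (f : P → ℝ) :
    (snocChain C p hp hstep).ell f
      = C.ell f + (C.sg : ℝ) * ((-1) ^ (C.m + 1) * f p) := by
  have key : ∀ i : Fin C.m, extq C.q p i.castSucc = C.q i := by
    intro i
    have h1 : i.castSucc = (⟨(i : ℕ), by omega⟩ : Fin (C.m + 1)) := Fin.ext rfl
    rw [h1, extq_lt C.q p i i.isLt]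
  have klast : extq C.q p (Fin.last C.m) = p := by
    have h1 : (Fin.last C.m) = (⟨C.m, by omega⟩ : Fin (C.m + 1)) := Fin.ext rfl
    rw [h1, extq_last]
  show (C.sg : ℝ) * ∑ j : Fin (C.m + 1), (-1 : ℝ) ^ ((j : ℕ) + 1) * f (extq C.q p j)
      = C.ell f + (C.sg : ℝ) * ((-1) ^ (C.m + 1) * f p)
  rw [Fin.sum_univ_castSucc, mul_add]
  congr 1
  · unfold AltChain.ell
    congr 1
    refine Finset.sum_congr rfl fun i _ => ?_
    rw [key i, Fin.coe_castSucc]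
  · rw [klast, Fin.val_last]

lemma snocChain_m (C : AltChain P lep lem) (p hp hstep) :
    (snocChain C p hp hstep).m = C.m + 1 := rfl

lemma snocChain_sg (C : AltChain P lep lem) (p hp hstep) :
    (snocChain C p hp hstep).sg = C.sg := rfl

def popChain (C : AltChain P lep lem) : AltChain P lep lem where
  sg := C.sg
  hsg := C.hsg
  m := C.m - 1
  q := fun i => C.q ⟨(i : ℕ), by omega⟩
  inj := by
    intro i j hij
    have := C.inj hij
    exact Fin.ext (by simpa using congrArg Fin.val this)
  step := by
    intro j h
    exact C.step j (by omega)

lemma sum_pop {n : ℕ} (hn : n ≠ 0) (F : Fin n → ℝ) :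
    ∑ i, F i = (∑ i : Fin (n - 1), F ⟨(i : ℕ), by omega⟩) + F ⟨n - 1, by omega⟩ := by
  obtain ⟨m, rfl⟩ : ∃ m, n = m + 1 := ⟨n - 1, by omega⟩
  rw [Fin.sum_univ_castSucc]
  congr 1

lemma popChain_ell (C : AltChain P lep lem) (h : C.m ≠ 0) (f : P → ℝ) :
    C.ell f = (popChain C).ell f
      + (C.sg : ℝ) * ((-1) ^ C.m * f (C.q ⟨C.m - 1, by omega⟩)) := by
  unfold AltChain.ell popChain
  rw [sum_pop h (fun j : Fin C.m => (-1 : ℝ) ^ ((j : ℕ) + 1) * f (C.q j)), mul_add]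
  congr 2
  rw [show C.m - 1 + 1 = C.m from by omega]

lemma popChain_sgn (C : AltChain P lep lem) (h : C.m ≠ 0) :
    (popChain C).sgn = -C.sgn := by
  show (C.sg : ℝ) * (-1) ^ (C.m - 1) = -((C.sg : ℝ) * (-1) ^ C.m)
  obtain ⟨m, hm⟩ : ∃ m, C.m = m + 1 := ⟨C.m - 1, by omega⟩
  rw [hm]
  simp [pow_succ]

end DOPAux
section a2
variable {P : Type*} {lep lem : P → P → Prop}
namespace DOPAux

lemma ell_comb (C : AltChain P lep lem) (a b : ℝ) (x y : P → ℝ) :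
    C.ell (a • x + b • y) = a * C.ell x + b * C.ell y := by
  unfold AltChain.ell
  have : ∀ j : Fin C.m, (-1 : ℝ) ^ ((j : ℕ) + 1) * (a • x + b • y) (C.q j)
      = a * ((-1 : ℝ) ^ ((j : ℕ) + 1) * x (C.q j))
        + b * ((-1 : ℝ) ^ ((j : ℕ) + 1) * y (C.q j)) := by
    intro j; simp; ring
  rw [Finset.sum_congr rfl fun j _ => this j, Finset.sum_add_distrib,
    ← Finset.mul_sum, ← Finset.mul_sum]
  ring

lemma ell_smul (C : AltChain P lep lem) (c : ℝ) (g : P → ℝ) :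
    C.ell (c • g) = c * C.ell g := by
  have := ell_comb C c 0 g g
  simpa using this

/-- Key combinatorial bound: chain functional on an order polytope member. -/
lemma chainBound (le' : P → P → Prop) {g : P → ℝ}
    (hg1 : ∀ a, 0 ≤ g a ∧ g a ≤ 1) (hg2 : ∀ a b, le' a b → g a ≤ g b) :
    ∀ (m : ℕ) (sg : ℤ), (sg = 1 ∨ sg = -1) → ∀ q : Fin m → P,
      (∀ (j : ℕ) (h : j + 1 < m), sg * (-1) ^ (j + 1) = 1 →
        le' (q ⟨j, Nat.lt_of_succ_lt h⟩) (q ⟨j + 1, h⟩)) →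
      (sg : ℝ) * ∑ j : Fin m, (-1 : ℝ) ^ ((j : ℕ) + 1) * g (q j)
        ≤ (1 + (sg : ℝ) * (-1) ^ m) / 2 := by
  intro m
  induction m using Nat.strong_induction_on with
  | _ m IH =>
    intro sg hsg q hq
    match m, IH, q, hq with
    | 0, _, q, hq =>
      simp only [Finset.univ_eq_empty, Finset.sum_empty, mul_zero, pow_zero, mul_one]
      rcases hsg with rfl | rfl <;> norm_num
    | 1, _, q, hq =>
      rw [Fin.sum_univ_one]
      rcases hsg with rfl | rfl
      · push_cast
        have := (hg1 (q 0)).1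
        simp only [Fin.val_zero, pow_one]
        norm_num
        linarith
      · push_cast
        have := (hg1 (q 0)).2
        simp only [Fin.val_zero, pow_one]
        norm_num
        linarith
    | (m₁ + 2), IH, q, hq =>
      rcases hsg with rfl | rfl
      · -- sg = 1 : peel one element, flip sign
        rw [Fin.sum_univ_succ]
        set q' : Fin (m₁ + 1) → P := fun i => q i.succ with hq'
        have hstep' : ∀ (j : ℕ) (h : j + 1 < m₁ + 1), (-1 : ℤ) * (-1) ^ (j + 1) = 1 →
            le' (q' ⟨j, Nat.lt_of_succ_lt h⟩) (q' ⟨j + 1, h⟩) := by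
          intro j h hc
          have hc2 : (1 : ℤ) * (-1) ^ (j + 1 + 1) = 1 := by
            rw [pow_succ]
            linarith [hc]
          have := hq (j + 1) (by omega) hc2
          have e1 : (⟨j, Nat.lt_of_succ_lt h⟩ : Fin (m₁ + 1)).succ
              = (⟨j + 1, by omega⟩ : Fin (m₁ + 2)) := rfl
          have e2 : (⟨j + 1, h⟩ : Fin (m₁ + 1)).succ
              = (⟨j + 1 + 1, by omega⟩ : Fin (m₁ + 2)) := rfl
          simpa [hq', e1, e2] using this
        have hIH := IH (m₁ + 1) (by omega) (-1) (Or.inr rfl) q' hstep'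
        have hsum : ∑ i : Fin (m₁ + 1), (-1 : ℝ) ^ ((i.succ : ℕ) + 1) * g (q i.succ)
            = - ∑ i : Fin (m₁ + 1), (-1 : ℝ) ^ ((i : ℕ) + 1) * g (q' i) := by
          rw [← Finset.sum_neg_distrib]
          refine Finset.sum_congr rfl fun i _ => ?_
          have : ((i.succ : ℕ) + 1) = ((i : ℕ) + 1) + 1 := by simp [Fin.val_succ]
          rw [this, pow_succ]
          simp only [hq']
          ring
        rw [hsum]
        push_cast at hIH ⊢
        have h0 := (hg1 (q 0)).1
        have hpow : (-1 : ℝ) ^ (m₁ + 2) = -((-1 : ℝ) ^ (m₁ + 1)) := by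
          rw [pow_succ]; ring
        rw [hpow]
        simp only [Fin.val_zero, zero_add, pow_one, one_mul]
        linarith [hIH, h0]
      · -- sg = -1 : peel two elements
        rw [Fin.sum_univ_succ, Fin.sum_univ_succ]
        set q'' : Fin m₁ → P := fun i => q i.succ.succ with hq''
        have hstep'' : ∀ (j : ℕ) (h : j + 1 < m₁), (-1 : ℤ) * (-1) ^ (j + 1) = 1 →
            le' (q'' ⟨j, Nat.lt_of_succ_lt h⟩) (q'' ⟨j + 1, h⟩) := by
          intro j h hc
          have hc2 : (-1 : ℤ) * (-1) ^ (j + 2 + 1) = 1 := by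
            have : (-1 : ℤ) ^ (j + 2 + 1) = (-1) ^ (j + 1) := by
              rw [show j + 2 + 1 = (j + 1) + 2 from rfl, pow_add]
              norm_num
            rw [this]; exact hc
          have := hq (j + 2) (by omega) hc2
          have e1 : ((⟨j, Nat.lt_of_succ_lt h⟩ : Fin m₁).succ).succ
              = (⟨j + 2, by omega⟩ : Fin (m₁ + 2)) := rfl
          have e2 : ((⟨j + 1, h⟩ : Fin m₁).succ).succ
              = (⟨j + 2 + 1, by omega⟩ : Fin (m₁ + 2)) := rfl
          simpa [hq'', e1, e2] using this
        have hIH := IH m₁ (by omega) (-1) (Or.inr rfl) q'' hstep''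
        have h01 : g (q 0) ≤ g (q 1) := by
          have hc : (-1 : ℤ) * (-1) ^ (0 + 1) = 1 := by norm_num
          exact hg2 _ _ (by simpa using hq 0 (by omega) hc)
        have hsum : ∑ i : Fin m₁, (-1 : ℝ) ^ ((i.succ.succ : ℕ) + 1) * g (q i.succ.succ)
            = ∑ i : Fin m₁, (-1 : ℝ) ^ ((i : ℕ) + 1) * g (q'' i) := by
          refine Finset.sum_congr rfl fun i _ => ?_
          have : ((i.succ.succ : ℕ) + 1) = ((i : ℕ) + 1) + 2 := by simp [Fin.val_succ]
          rw [this, pow_add]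
          simp [hq'']
        rw [hsum]
        push_cast at hIH ⊢
        have hpow : (-1 : ℝ) ^ (m₁ + 2) = (-1 : ℝ) ^ m₁ := by
          rw [pow_add]; norm_num
        have hv1 : ((Fin.succ (0 : Fin (m₁ + 1)) : Fin (m₁+2)) : ℕ) = 1 := rfl
        have hqs : q (Fin.succ (0 : Fin (m₁ + 1))) = q 1 := rfl
        rw [hv1, hpow, hqs]
        simp only [Fin.val_zero, zero_add, pow_one]
        norm_num
        linarith [hIH, h01]

end DOPAux
end a2
section a3
namespace DOPAux
variable {P : Type*} {lep lem : P → P → Prop}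

/-- Values of descending alternating paths starting at `p`; the `ℤ` parameter is the
sign of the first step of the path (if any). -/
inductive DVal (lep lem : P → P → Prop) (f : P → ℝ) : P → ℤ → ℝ → Prop
  | base0 (p : P) (σ : ℤ) : DVal lep lem f p σ 0
  | basef (p : P) (σ : ℤ) : DVal lep lem f p σ (f p)
  | stepP {a p : P} {v : ℝ} (h1 : lep a p) (h2 : a ≠ p) (h3 : DVal lep lem f a (-1) v) :
      DVal lep lem f p 1 v
  | stepM {a p : P} {v : ℝ} (h1 : lem a p) (h2 : a ≠ p) (h3 : DVal lep lem f a 1 v) :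
      DVal lep lem f p (-1) (v + f p - f a)

/-- The chain-extraction invariant. -/
lemma dval_chain {l : P → P → Prop} (hl : IsLinearOrder P l)
    (hlp : ∀ a b, lep a b → l a b) (hlm : ∀ a b, lem a b → l a b)
    (f : P → ℝ) {p : P} {σ : ℤ} {v : ℝ}
    (hd : DVal lep lem f p σ v) (hσ : σ = 1 ∨ σ = -1) :
    ∃ C : AltChain P lep lem,
      C.sg * (-1) ^ C.m = -σ ∧
      v = C.ell f + (if σ = 1 then f p else 0) ∧
      (∀ i : Fin C.m, l (C.q i) p) ∧
      (∀ _ : C.m ≠ 0, C.q ⟨C.m - 1, by omega⟩ = p) := by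
  have hrefl : ∀ a : P, l a a := fun a => hl.toIsPartialOrder.toIsPreorder.toRefl.refl a
  have htrans : ∀ a b c : P, l a b → l b c → l a c :=
    fun a b c => hl.toIsPartialOrder.toIsPreorder.toIsTrans.trans a b c
  have hanti : ∀ a b : P, l a b → l b a → a = b :=
    fun a b => hl.toIsPartialOrder.toAntisymm.antisymm a b
  induction hd with
  | base0 p σ =>
    rcases hσ with rfl | rfl
    · refine ⟨oneChain lep lem 1 (Or.inl rfl) p, by simp [oneChain], ?_, fun i => hrefl p, fun _ => rfl⟩
      rw [oneChain_ell, if_pos rfl]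
      push_cast
      ring
    · refine ⟨emptyChain lep lem 1 (Or.inl rfl), by simp [emptyChain], ?_, fun i => i.elim0,
        fun h => absurd rfl h⟩
      rw [emptyChain_ell, if_neg (by norm_num)]
      norm_num
  | basef p σ =>
    rcases hσ with rfl | rfl
    · refine ⟨emptyChain lep lem (-1) (Or.inr rfl), by simp [emptyChain], ?_, fun i => i.elim0,
        fun h => absurd rfl h⟩
      rw [emptyChain_ell, if_pos rfl]
      norm_num
    · refine ⟨oneChain lep lem (-1) (Or.inr rfl) p, by simp [oneChain], ?_, fun i => hrefl p,
        fun _ => rfl⟩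
      rw [oneChain_ell, if_neg (by norm_num)]
      push_cast
      ring
  | stepP h1 h2 h3 IH =>
    rename_i a p v
    obtain ⟨C, hC1, hC2, hdom, htop⟩ := IH (Or.inr rfl)
    rw [if_neg (by norm_num), add_zero] at hC2
    have hlap : l a p := hlp a p h1
    by_cases hm0 : C.m = 0
    · have : C.ell f = 0 := ell_of_m_eq_zero C hm0 f
      rw [this] at hC2
      refine ⟨oneChain lep lem 1 (Or.inl rfl) p, by simp [oneChain], ?_, fun i => hrefl p, fun _ => rfl⟩
      rw [oneChain_ell, if_pos rfl, hC2]
      push_cast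
      ring
    · have hp' : ∀ i, C.q i ≠ p := by
        intro i heq
        have h1' : l p a := heq ▸ hdom i
        exact h2 (hanti a p hlap h1')
      have hstep' : ∀ _ : C.m ≠ 0,
          (if C.sg * (-1) ^ C.m = 1 then lep else lem) (C.q ⟨C.m - 1, by omega⟩) p := by
        intro h
        have hcond : C.sg * (-1 : ℤ) ^ C.m = 1 := by rw [hC1]; ring
        rw [if_pos hcond, htop hm0]
        exact h1
      refine ⟨snocChain C p hp' hstep', ?_, ?_, ?_, ?_⟩
      · rw [snocChain_sg, snocChain_m, pow_succ]
        rw [show C.sg * ((-1 : ℤ) ^ C.m * -1) = C.sg * (-1) ^ C.m * -1 by ring, hC1]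
        ring
      · rw [snocChain_ell, if_pos rfl]
        have hC1R : (C.sg : ℝ) * (-1 : ℝ) ^ C.m = 1 := by exact_mod_cast hC1
        have hkey : (C.sg : ℝ) * ((-1 : ℝ) ^ (C.m + 1) * f p)
            = ((C.sg : ℝ) * (-1 : ℝ) ^ C.m) * ((-1) * f p) := by rw [pow_succ]; ring
        rw [hkey, hC1R, hC2]
        ring
      · intro i
        show l (extq C.q p i) p
        unfold extq
        split_ifs with hi
        · exact htrans _ _ _ (hdom ⟨(i : ℕ), hi⟩) hlap
        · exact hrefl p
      · intro _
        show extq C.q p ⟨C.m + 1 - 1, by omega⟩ = p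
        have : (⟨C.m + 1 - 1, by omega⟩ : Fin (C.m + 1)) = ⟨C.m, by omega⟩ :=
          Fin.ext (by simp)
        rw [this, extq_last]
  | stepM h1 h2 h3 IH =>
    rename_i a p v
    obtain ⟨C, hC1, hC2, hdom, htop⟩ := IH (Or.inl rfl)
    rw [if_pos rfl] at hC2
    have hlap : l a p := hlm a p h1
    by_cases hm0 : C.m = 0
    · have hz : C.ell f = 0 := ell_of_m_eq_zero C hm0 f
      rw [hz, zero_add] at hC2
      refine ⟨oneChain lep lem (-1) (Or.inr rfl) p, by simp [oneChain], ?_, fun i => hrefl p,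
        fun _ => rfl⟩
      rw [oneChain_ell, if_neg (by norm_num), hC2]
      push_cast
      ring
    · have hp' : ∀ i, C.q i ≠ p := by
        intro i heq
        have h1' : l p a := heq ▸ hdom i
        exact h2 (hanti a p hlap h1')
      have hstep' : ∀ _ : C.m ≠ 0,
          (if C.sg * (-1) ^ C.m = 1 then lep else lem) (C.q ⟨C.m - 1, by omega⟩) p := by
        intro h
        have hcond : C.sg * (-1 : ℤ) ^ C.m = -1 := by rw [hC1]
        rw [if_neg (by rw [hcond]; norm_num), htop hm0]
        exact h1
      refine ⟨snocChain C p hp' hstep', ?_, ?_, ?_, ?_⟩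
      · rw [snocChain_sg, snocChain_m, pow_succ]
        rw [show C.sg * ((-1 : ℤ) ^ C.m * -1) = C.sg * (-1) ^ C.m * -1 by ring, hC1]
        ring
      · rw [snocChain_ell, if_neg (by norm_num), add_zero]
        have hC1R : (C.sg : ℝ) * (-1 : ℝ) ^ C.m = -1 := by exact_mod_cast hC1
        have hkey : (C.sg : ℝ) * ((-1 : ℝ) ^ (C.m + 1) * f p)
            = ((C.sg : ℝ) * (-1 : ℝ) ^ C.m) * ((-1) * f p) := by rw [pow_succ]; ring
        rw [hkey, hC1R, hC2]
        ring
      · intro i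
        show l (extq C.q p i) p
        unfold extq
        split_ifs with hi
        · exact htrans _ _ _ (hdom ⟨(i : ℕ), hi⟩) hlap
        · exact hrefl p
      · intro _
        show extq C.q p ⟨C.m + 1 - 1, by omega⟩ = p
        have : (⟨C.m + 1 - 1, by omega⟩ : Fin (C.m + 1)) = ⟨C.m, by omega⟩ :=
          Fin.ext (by simp)
        rw [this, extq_last]

end DOPAux
end a3
section a4
namespace DOPAux
variable {P : Type*} {lep lem : P → P → Prop}

lemma dval_bounds {l : P → P → Prop} (hl : IsLinearOrder P l)
    (hlp : ∀ a b, lep a b → l a b) (hlm : ∀ a b, lem a b → l a b)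
    (f : P → ℝ) (t : ℝ)
    (hx : ∀ C : AltChain P lep lem, C.ell f - C.sgn * t ≤ 1)
    {p : P} {σ : ℤ} {v : ℝ}
    (hd : DVal lep lem f p σ v) (hσ : σ = 1 ∨ σ = -1) :
    v ≤ 1 + t ∧ v ≤ f p + (1 - t) := by
  obtain ⟨C, hC1, hC2, hdom, htop⟩ := dval_chain hl hlp hlm f hd hσ
  have hC1R : (C.sg : ℝ) * (-1 : ℝ) ^ C.m = -(σ : ℝ) := by exact_mod_cast hC1
  have hsgn : C.sgn = -(σ : ℝ) := hC1R
  have hxC := hx C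
  rcases hσ with rfl | rfl
  · rw [if_pos rfl] at hC2
    push_cast at hsgn hC1R
    constructor
    · by_cases hm0 : C.m = 0
      · rw [ell_of_m_eq_zero C hm0 f, zero_add] at hC2
        have h2 := hx (oneChain lep lem (-1) (Or.inr rfl) p)
        rw [oneChain_ell, oneChain_sgn] at h2
        push_cast at h2
        linarith
      · have h2 := hx (popChain C)
        have he := popChain_ell C hm0 f
        rw [htop hm0] at he
        have hkey : (C.sg : ℝ) * ((-1 : ℝ) ^ C.m * f p) = -f p := by
          rw [← mul_assoc, hC1R]; ring
        rw [hkey] at he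
        rw [popChain_sgn C hm0, hsgn] at h2
        linarith
    · rw [hsgn] at hxC
      linarith
  · rw [if_neg (by norm_num), add_zero] at hC2
    push_cast at hsgn hC1R
    constructor
    · rw [hsgn] at hxC
      linarith
    · by_cases hm0 : C.m = 0
      · rw [ell_of_m_eq_zero C hm0 f] at hC2
        have h2 := hx (oneChain lep lem 1 (Or.inl rfl) p)
        rw [oneChain_ell, oneChain_sgn] at h2
        push_cast at h2
        linarith
      · have h2 := hx (popChain C)
        have he := popChain_ell C hm0 f
        rw [htop hm0] at he
        have hkey : (C.sg : ℝ) * ((-1 : ℝ) ^ C.m * f p) = f p := by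
          rw [← mul_assoc, hC1R]; ring
        rw [hkey] at he
        rw [popChain_sgn C hm0, hsgn] at h2
        linarith

lemma dval_up_p (hp : IsPartialOrder P lep) {f : P → ℝ} {a b : P} {σ : ℤ} {v : ℝ}
    (hab : lep a b) (hne : a ≠ b) (hσ : σ = 1 ∨ σ = -1)
    (hd : DVal lep lem f a σ v) : DVal lep lem f b 1 v := by
  rcases hσ with rfl | rfl
  · cases hd with
    | base0 => exact DVal.stepP hab hne (DVal.base0 a (-1))
    | basef => exact DVal.stepP hab hne (DVal.basef a (-1))
    | stepP h1 h2 h3 =>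
      rename_i c
      have hcb : lep c b := hp.toIsPreorder.toIsTrans.trans c a b h1 hab
      have hcne : c ≠ b := by
        intro h
        subst h
        exact hne (hp.toAntisymm.antisymm a c hab h1)
      exact DVal.stepP hcb hcne h3
  · exact DVal.stepP hab hne hd

lemma dval_up_m (hm : IsPartialOrder P lem) {f : P → ℝ} {a b : P} {σ : ℤ} {v : ℝ}
    (hab : lem a b) (hne : a ≠ b) (hσ : σ = 1 ∨ σ = -1)
    (hd : DVal lep lem f a σ v) : DVal lep lem f b (-1) (v + f b - f a) := by
  rcases hσ with rfl | rfl
  · exact DVal.stepM hab hne hd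
  · cases hd with
    | base0 =>
      exact DVal.stepM hab hne (DVal.base0 (lep := lep) (lem := lem) (f := f) a 1)
    | basef =>
      exact DVal.stepM hab hne (DVal.basef (lep := lep) (lem := lem) (f := f) a 1)
    | stepM h1 h2 h3 =>
      rename_i c v'
      have hcb : lem c b := hm.toIsPreorder.toIsTrans.trans c a b h1 hab
      have hcne : c ≠ b := by
        intro h
        subst h
        exact hne (hm.toAntisymm.antisymm a c hab h1)
      have heq : v' + f a - f c + f b - f a = v' + f b - f c := by ring
      rw [heq]
      exact DVal.stepM hcb hcne h3

end DOPAux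
end a4

/-- For a compatible double poset, the double order polytope is cut out by the
inequalities `ℓ_C(f) − sgn(C)·t ≤ 1` over all alternating chains `C`. -/
theorem doubleOrderPoly_eq_altChain_inequalities
    (P : Type*) [Fintype P] (lep lem : P → P → Prop)
    (hp : IsPartialOrder P lep) (hm : IsPartialOrder P lem)
    (hcomp : Compatible P lep lem) :
    doubleOrderPoly P lep lem =
      {x : (P → ℝ) × ℝ |
        ∀ C : AltChain P lep lem, C.ell x.1 - C.sgn * x.2 ≤ 1} := by
  classical
  obtain ⟨l, hl, hlp, hlm⟩ := hcomp
  apply Set.Subset.antisymm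
  · -- forward inclusion
    apply convexHull_min
    · rintro z (⟨F, hF, rfl⟩ | ⟨F, hF, rfl⟩)
      · obtain ⟨g, hg, rfl⟩ := hF
        simp only [Set.mem_setOf_eq]
        intro C
        have hsteps : ∀ (j : ℕ) (hj : j + 1 < C.m), C.sg * (-1) ^ (j + 1) = 1 →
            lep (C.q ⟨j, Nat.lt_of_succ_lt hj⟩) (C.q ⟨j + 1, hj⟩) := by
          intro j hj hcond
          have := C.step j hj
          rwa [if_pos hcond] at this
        have hb := DOPAux.chainBound lep hg.1 hg.2 C.m C.sg C.hsg C.q hsteps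
        have he : C.ell ((2 : ℝ) • g) = 2 * C.ell g := DOPAux.ell_smul C 2 g
        have he2 : C.ell g = (C.sg : ℝ) * ∑ j : Fin C.m, (-1 : ℝ) ^ ((j : ℕ) + 1) * g (C.q j) := rfl
        have he3 : C.sgn = (C.sg : ℝ) * (-1 : ℝ) ^ C.m := rfl
        rw [he, he2, he3]
        linarith
      · obtain ⟨g, hg, rfl⟩ := hF
        simp only [Set.mem_setOf_eq]
        intro C
        have hsg' : -C.sg = 1 ∨ -C.sg = -1 := by rcases C.hsg with h | h <;> [right; left] <;> omega
        have hsteps : ∀ (j : ℕ) (hj : j + 1 < C.m), -C.sg * (-1) ^ (j + 1) = 1 →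
            lem (C.q ⟨j, Nat.lt_of_succ_lt hj⟩) (C.q ⟨j + 1, hj⟩) := by
          intro j hj hcond
          have h1 : C.sg * (-1 : ℤ) ^ (j + 1) = -1 := by linarith
          have := C.step j hj
          rwa [if_neg (by rw [h1]; norm_num)] at this
        have hb := DOPAux.chainBound lem hg.1 hg.2 C.m (-C.sg) hsg' C.q hsteps
        have he : C.ell ((-2 : ℝ) • g) = -2 * C.ell g := DOPAux.ell_smul C (-2) g
        have he2 : C.ell g = (C.sg : ℝ) * ∑ j : Fin C.m, (-1 : ℝ) ^ ((j : ℕ) + 1) * g (C.q j) := rfl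
        have he3 : C.sgn = (C.sg : ℝ) * (-1 : ℝ) ^ C.m := rfl
        push_cast at hb
        rw [he, he2, he3]
        linarith
    · -- the inequality set is convex
      intro x hx y hy a b ha hb hab
      simp only [Set.mem_setOf_eq] at hx hy ⊢
      intro C
      have e1 : (a • x + b • y).1 = a • x.1 + b • y.1 := rfl
      have e2 : (a • x + b • y).2 = a * x.2 + b * y.2 := rfl
      rw [e1, e2, DOPAux.ell_comb]
      have h1 : a * (C.ell x.1 - C.sgn * x.2) ≤ a * 1 :=
        mul_le_mul_of_nonneg_left (hx C) ha
      have h2 : b * (C.ell y.1 - C.sgn * y.2) ≤ b * 1 :=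
        mul_le_mul_of_nonneg_left (hy C) hb
      nlinarith [h1, h2, hab]
  · -- backward inclusion
    rintro ⟨f, t⟩ hx
    simp only [Set.mem_setOf_eq] at hx
    have ht1 : t ≤ 1 := by
      have := hx (DOPAux.emptyChain lep lem (-1) (Or.inr rfl))
      rw [DOPAux.emptyChain_ell, DOPAux.emptyChain_sgn] at this
      push_cast at this
      linarith
    have ht2 : -1 ≤ t := by
      have := hx (DOPAux.emptyChain lep lem 1 (Or.inl rfl))
      rw [DOPAux.emptyChain_ell, DOPAux.emptyChain_sgn] at this
      push_cast at this
      linarith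
    set S : P → Set ℝ := fun p =>
      {v | DOPAux.DVal lep lem f p 1 v ∨ DOPAux.DVal lep lem f p (-1) v} with hS
    have hmemB : ∀ p v, v ∈ S p → v ≤ 1 + t ∧ v ≤ f p + (1 - t) := by
      intro p v hv
      rcases hv with h | h
      · exact DOPAux.dval_bounds hl hlp hlm f t hx h (Or.inl rfl)
      · exact DOPAux.dval_bounds hl hlp hlm f t hx h (Or.inr rfl)
    have hbdd : ∀ p, BddAbove (S p) := fun p => ⟨1 + t, fun v hv => (hmemB p v hv).1⟩
    have hSne : ∀ p, (S p).Nonempty := fun p => ⟨0, Or.inl (DOPAux.DVal.base0 p 1)⟩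
    set W : P → ℝ := fun p => sSup (S p) with hW
    have hW0 : ∀ p, 0 ≤ W p := fun p => le_csSup (hbdd p) (Or.inl (DOPAux.DVal.base0 p 1))
    have hWf : ∀ p, f p ≤ W p := fun p => le_csSup (hbdd p) (Or.inl (DOPAux.DVal.basef p 1))
    have hWA : ∀ p, W p ≤ 1 + t := fun p => csSup_le (hSne p) fun v hv => (hmemB p v hv).1
    have hWB : ∀ p, W p ≤ f p + (1 - t) := fun p => csSup_le (hSne p) fun v hv => (hmemB p v hv).2
    have hWmP : ∀ a b, lep a b → W a ≤ W b := by
      intro a b hab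
      by_cases hne : a = b
      · subst hne; exact le_refl _
      · refine csSup_le (hSne a) fun v hv => ?_
        have hd : DOPAux.DVal lep lem f b 1 v := by
          rcases hv with h | h
          · exact DOPAux.dval_up_p hp hab hne (Or.inl rfl) h
          · exact DOPAux.dval_up_p hp hab hne (Or.inr rfl) h
        exact le_csSup (hbdd b) (Or.inl hd)
    have hWmM : ∀ a b, lem a b → W a + (f b - f a) ≤ W b := by
      intro a b hab
      by_cases hne : a = b
      · subst hne; simp
      · have hstep : ∀ v ∈ S a, v ≤ W b - (f b - f a) := by
          intro v hv
          have hd : DOPAux.DVal lep lem f b (-1) (v + f b - f a) := by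
            rcases hv with h | h
            · exact DOPAux.dval_up_m hm hab hne (Or.inl rfl) h
            · exact DOPAux.dval_up_m hm hab hne (Or.inr rfl) h
          have := le_csSup (hbdd b) (Or.inr hd)
          linarith
        have := csSup_le (hSne a) hstep
        linarith
    set gg : P → ℝ := fun p => W p / (1 + t) with hggdef
    set hh : P → ℝ := fun p => (W p - f p) / (1 - t) with hhhdef
    have hαg : ∀ p, (1 + t) * gg p = W p := by
      intro p
      by_cases h1t : (1 : ℝ) + t = 0
      · have hz : W p = 0 := le_antisymm (h1t ▸ hWA p) (hW0 p)
        simp [hggdef, h1t, hz]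
      · simp only [hggdef]
        field_simp
    have hβh : ∀ p, (1 - t) * hh p = W p - f p := by
      intro p
      by_cases h1t : (1 : ℝ) - t = 0
      · have hz : W p - f p = 0 := by
          have h1 := hWB p
          have h2 := hWf p
          linarith
        simp [hhhdef, h1t, hz]
      · simp only [hhhdef]
        field_simp
    have hgO : gg ∈ orderPoly P lep := by
      refine ⟨fun p => ⟨div_nonneg (hW0 p) (by linarith), ?_⟩, fun a b hab => ?_⟩
      · by_cases h1t : (1 : ℝ) + t = 0
        · simp [hggdef, h1t]
        · have hpos : (0 : ℝ) < 1 + t := lt_of_le_of_ne (by linarith) (Ne.symm h1t)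
          exact (div_le_one hpos).2 (hWA p)
      · by_cases h1t : (1 : ℝ) + t = 0
        · simp [hggdef, h1t]
        · have hpos : (0 : ℝ) < 1 + t := lt_of_le_of_ne (by linarith) (Ne.symm h1t)
          show W a / (1 + t) ≤ W b / (1 + t)
          rw [div_le_div_iff₀ hpos hpos]
          nlinarith [hWmP a b hab, hpos]
    have hhO : hh ∈ orderPoly P lem := by
      refine ⟨fun p => ⟨div_nonneg (by linarith [hWf p]) (by linarith), ?_⟩, fun a b hab => ?_⟩
      · by_cases h1t : (1 : ℝ) - t = 0
        · simp [hhhdef, h1t]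
        · have hpos : (0 : ℝ) < 1 - t := lt_of_le_of_ne (by linarith) (Ne.symm h1t)
          refine (div_le_one hpos).2 ?_
          have := hWB p
          linarith
      · by_cases h1t : (1 : ℝ) - t = 0
        · simp [hhhdef, h1t]
        · have hpos : (0 : ℝ) < 1 - t := lt_of_le_of_ne (by linarith) (Ne.symm h1t)
          have hnum : W a - f a ≤ W b - f b := by
            have := hWmM a b hab
            linarith
          show (W a - f a) / (1 - t) ≤ (W b - f b) / (1 - t)
          rw [div_le_div_iff₀ hpos hpos]
          nlinarith [hnum, hpos]
    have hmem1 : (((2 : ℝ) • gg, (1 : ℝ)) : (P → ℝ) × ℝ) ∈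
        (((fun f => (f, (1 : ℝ))) '' ((2 : ℝ) • orderPoly P lep)) ∪
         ((fun f => (f, (-1 : ℝ))) '' ((-2 : ℝ) • orderPoly P lem))) :=
      Or.inl ⟨(2 : ℝ) • gg, smul_mem_smul_set hgO, rfl⟩
    have hmem2 : (((-2 : ℝ) • hh, (-1 : ℝ)) : (P → ℝ) × ℝ) ∈
        (((fun f => (f, (1 : ℝ))) '' ((2 : ℝ) • orderPoly P lep)) ∪
         ((fun f => (f, (-1 : ℝ))) '' ((-2 : ℝ) • orderPoly P lem))) :=
      Or.inr ⟨(-2 : ℝ) • hh, smul_mem_smul_set hhO, rfl⟩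
    have hcomb : ((1 + t) / 2) • (((2 : ℝ) • gg, (1 : ℝ)) : (P → ℝ) × ℝ)
        + ((1 - t) / 2) • (((-2 : ℝ) • hh, (-1 : ℝ)) : (P → ℝ) × ℝ) = (f, t) := by
      have c1 : ((1 + t) / 2) • ((2 : ℝ) • gg) + ((1 - t) / 2) • ((-2 : ℝ) • hh) = f := by
        funext p
        simp only [Pi.add_apply, Pi.smul_apply, smul_eq_mul]
        have e1 := hαg p
        have e2 := hβh p
        nlinarith [e1, e2]
      have c2 : ((1 + t) / 2) * 1 + ((1 - t) / 2) * (-1) = t := by ring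
      ext
      · rw [show (((1 + t) / 2) • (((2 : ℝ) • gg, (1 : ℝ)) : (P → ℝ) × ℝ)
          + ((1 - t) / 2) • (((-2 : ℝ) • hh, (-1 : ℝ)) : (P → ℝ) × ℝ)).1
          = ((1 + t) / 2) • ((2 : ℝ) • gg) + ((1 - t) / 2) • ((-2 : ℝ) • hh) from rfl, c1]
      · rw [show (((1 + t) / 2) • (((2 : ℝ) • gg, (1 : ℝ)) : (P → ℝ) × ℝ)
          + ((1 - t) / 2) • (((-2 : ℝ) • hh, (-1 : ℝ)) : (P → ℝ) × ℝ)).2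
          = ((1 + t) / 2) * 1 + ((1 - t) / 2) * (-1) from rfl, c2]
    show ((f, t) : (P → ℝ) × ℝ) ∈ doubleOrderPoly P lep lem
    unfold doubleOrderPoly
    exact segment_subset_convexHull hmem1 hmem2
      ⟨(1 + t) / 2, (1 - t) / 2, by linarith, by linarith, by ring, hcomb⟩
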